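/- Let p be a prime, m ∈ ℕ with 0 < m < p, α₀ := m/p, and α₁ ∈ ℝ with α₀ < α₁ < 1, and consider the PI-RAPPOR randomizer M. Then: (i) for every nonzero j ∈ ZMod p, |Φ_{j,1}| = m·p and |Φ_{j,0}| = (p − m)·p, so M_j is a well-defined PMF on (ZMod p)²; (ii) PI-RAPPOR is deletion ln(max{α₁/α₀, (1−α₀)/(1−α₁)})-DP with reference the uniform distribution on (ZMod p)²: for every nonzero j and every φ ∈ (ZMod p)², p²·M_j(φ) ∈ {α₁/α₀, (1−α₁)/(1−α₀)}, hence min{α₀/α₁, (1−α₁)/(1−α₀)}·p^{-2} ≤ M_j(φ) ≤ max{α₁/α₀, (1−α₀)/(1−α₁)}·p^{-2}; and (iii) PI-RAPPOR is replacement ln(α₁(1−α₀)/(α₀(1−α₁)))-DP: for all distinct nonzero j, j' ∈ ZMod p and every φ, M_j(φ) ≤ (α₁·(1−α₀))/(α₀·(1−α₁)) · M_{j'}(φ). -/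

import Mathlib

open Finset

/-- **Well-definedness and privacy of the PI-RAPPOR randomizer.**
With `α₀ = m/p`, `bool(z) = (z.val < m)`, and
`M j φ = α₁/(mp)` if `bool(φ₀ + j·φ₁) = 1` and `(1−α₁)/((p−m)p)` otherwise:
(i) `|Φ_{j,1}| = m·p`, `|Φ_{j,0}| = (p−m)·p`, and `M j` is a PMF;
(ii) `p²·M_j(φ) ∈ {α₁/α₀, (1−α₁)/(1−α₀)}`, hence
`min{α₀/α₁, (1−α₁)/(1−α₀)}·p⁻² ≤ M_j(φ) ≤ max{α₁/α₀, (1−α₀)/(1−α₁)}·p⁻²`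
(deletion `ln(max{α₁/α₀, (1−α₀)/(1−α₁)})`-DP with uniform reference);
(iii) `M_j(φ) ≤ (α₁(1−α₀))/(α₀(1−α₁))·M_{j'}(φ)` for distinct nonzero `j, j'`
(replacement `ln(α₁(1−α₀)/(α₀(1−α₁)))`-DP). -/
theorem stmt_13 (p : ℕ) [Fact p.Prime] (m : ℕ) (hm0 : 0 < m) (hmp : m < p)
    (α₀ α₁ : ℝ) (hα₀ : α₀ = (m : ℝ) / p) (hα₁ : α₀ < α₁) (hα₁' : α₁ < 1)
    (M : ZMod p → ZMod p × ZMod p → ℝ)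
    (hM : ∀ j φ, M j φ =
      if (φ.1 + j * φ.2).val < m then α₁ / (m * p) else (1 - α₁) / ((p - m) * p)) :
    (∀ j : ZMod p, j ≠ 0 →
      (univ.filter fun φ : ZMod p × ZMod p => (φ.1 + j * φ.2).val < m).card = m * p ∧
      (univ.filter fun φ : ZMod p × ZMod p => ¬ (φ.1 + j * φ.2).val < m).card = (p - m) * p ∧
      (∀ φ, 0 ≤ M j φ) ∧ ∑ φ : ZMod p × ZMod p, M j φ = 1) ∧
    (∀ j : ZMod p, j ≠ 0 → ∀ φ : ZMod p × ZMod p,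
      ((p : ℝ) ^ 2 * M j φ ∈ ({α₁ / α₀, (1 - α₁) / (1 - α₀)} : Set ℝ)) ∧
      min (α₀ / α₁) ((1 - α₁) / (1 - α₀)) * ((p : ℝ) ^ 2)⁻¹ ≤ M j φ ∧
      M j φ ≤ max (α₁ / α₀) ((1 - α₀) / (1 - α₁)) * ((p : ℝ) ^ 2)⁻¹) ∧
    (∀ j j' : ZMod p, j ≠ 0 → j' ≠ 0 → j ≠ j' → ∀ φ : ZMod p × ZMod p,
      M j φ ≤ (α₁ * (1 - α₀)) / (α₀ * (1 - α₁)) * M j' φ) := by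
  classical
  have hp : 0 < p := (Fact.out : p.Prime).pos
  have hp0 : (0:ℝ) < p := by exact_mod_cast hp
  have hm0' : (0:ℝ) < m := by exact_mod_cast hm0
  have hmp' : (m:ℝ) < p := by exact_mod_cast hmp
  have hpm0 : (0:ℝ) < (p:ℝ) - m := by linarith
  have hα0pos : 0 < α₀ := by rw [hα₀]; positivity
  have hα0lt1 : α₀ < 1 := by rw [hα₀]; exact (div_lt_one hp0).2 hmp'
  have hα1pos : 0 < α₁ := hα0pos.trans hα₁
  have h1α1 : (0:ℝ) < 1 - α₁ := by linarith
  have h1α0 : (0:ℝ) < 1 - α₀ := by linarith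
  have hq0 : (0:ℝ) < (p:ℝ)^2 := by positivity
  -- value rewrites
  have hv1 : α₁ / ((m:ℝ) * p) = (α₁ / α₀) * (((p:ℝ))^2)⁻¹ := by
    rw [hα₀]; field_simp
  have hv0 : (1 - α₁) / (((p:ℝ) - m) * p) = ((1 - α₁) / (1 - α₀)) * (((p:ℝ))^2)⁻¹ := by
    rw [hα₀]; field_simp
  -- count of residues with val < m
  have hfilter1 : (univ.filter fun z : ZMod p => z.val < m).card = m := by
    have himg : (univ.filter fun z : ZMod p => z.val < m)
        = (Finset.range m).image (Nat.cast : ℕ → ZMod p) := by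
      ext z
      simp only [mem_filter, mem_univ, true_and, mem_image, mem_range]
      constructor
      · intro h
        exact ⟨z.val, h, ZMod.natCast_rightInverse z⟩
      · rintro ⟨i, hi, rfl⟩
        rwa [ZMod.val_cast_of_lt (hi.trans hmp)]
    rw [himg, Finset.card_image_of_injOn, Finset.card_range]
    intro a ha b hb hab
    have := congrArg ZMod.val hab
    rwa [ZMod.val_cast_of_lt ((mem_range.1 ha).trans hmp),
      ZMod.val_cast_of_lt ((mem_range.1 hb).trans hmp)] at this
  -- count in the product
  have hprod : ∀ j : ZMod p,
      (univ.filter fun φ : ZMod p × ZMod p => (φ.1 + j * φ.2).val < m).card = m * p := by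
    intro j
    have hc := Finset.card_equiv
      (s := univ.filter fun φ : ZMod p × ZMod p => (φ.1 + j * φ.2).val < m)
      (t := univ.filter fun q : ZMod p × ZMod p => q.1.val < m)
      (⟨fun φ => (φ.1 + j * φ.2, φ.2), fun φ => (φ.1 - j * φ.2, φ.2),
        fun φ => by simp, fun φ => by simp⟩)
      (fun φ => by simp)
    rw [hc]
    have hsplit : (univ.filter fun q : ZMod p × ZMod p => q.1.val < m)
        = (univ.filter fun z : ZMod p => z.val < m) ×ˢ univ := by
      ext q
      simp [Finset.mem_product]
    rw [hsplit, Finset.card_product, hfilter1, Finset.card_univ, ZMod.card]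
  have hprod0 : ∀ j : ZMod p,
      (univ.filter fun φ : ZMod p × ZMod p => ¬ (φ.1 + j * φ.2).val < m).card = (p - m) * p := by
    intro j
    have h2 := Finset.card_filter_add_card_filter_not (s := (univ : Finset (ZMod p × ZMod p)))
      (p := fun φ : ZMod p × ZMod p => (φ.1 + j * φ.2).val < m)
    have hu : (univ : Finset (ZMod p × ZMod p)).card = p * p := by
      simp [Finset.card_univ, ZMod.card]
    have hsub : (p - m) * p = p * p - m * p := Nat.sub_mul p m p
    rw [hprod j, hu] at h2
    omega
  -- nonnegativity
  have hnn : ∀ j φ, 0 ≤ M j φ := by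
    intro j φ
    rw [hM]
    split_ifs
    · exact le_of_lt (div_pos hα1pos (by positivity))
    · exact le_of_lt (div_pos h1α1 (mul_pos hpm0 hp0))
  -- sum
  have hsum : ∀ j : ZMod p, ∑ φ : ZMod p × ZMod p, M j φ = 1 := by
    intro j
    have hrw : ∑ φ : ZMod p × ZMod p, M j φ
        = ∑ φ : ZMod p × ZMod p,
          (if (φ.1 + j * φ.2).val < m then α₁ / ((m:ℝ) * p) else (1 - α₁) / (((p:ℝ) - m) * p)) :=
      Finset.sum_congr rfl fun φ _ => hM j φ
    rw [hrw, Finset.sum_ite, Finset.sum_const, Finset.sum_const, hprod j, hprod0 j,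
      nsmul_eq_mul, nsmul_eq_mul]
    have hc1 : ((m * p : ℕ) : ℝ) = (m:ℝ) * p := by push_cast; ring
    have hc0 : (((p - m) * p : ℕ) : ℝ) = ((p:ℝ) - m) * p := by
      push_cast [Nat.cast_sub hmp.le]; ring
    rw [hc1, hc0, mul_div_cancel₀ _ (by positivity : ((m:ℝ) * p) ≠ 0),
      mul_div_cancel₀ _ (by positivity : (((p:ℝ) - m) * p) ≠ 0)]
    ring
  -- privacy constants
  have hlow : min (α₀ / α₁) ((1 - α₁) / (1 - α₀)) ≤ α₁ / α₀ := by
    have h1 : α₀ / α₁ ≤ 1 := (div_le_one hα1pos).2 hα₁.le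
    have h2 : (1:ℝ) ≤ α₁ / α₀ := (one_le_div hα0pos).2 hα₁.le
    exact (min_le_left _ _).trans (h1.trans h2)
  have hhigh : (1 - α₁) / (1 - α₀) ≤ max (α₁ / α₀) ((1 - α₀) / (1 - α₁)) := by
    have h1 : (1 - α₁) / (1 - α₀) ≤ 1 := (div_le_one h1α0).2 (by linarith)
    have h2 : (1:ℝ) ≤ (1 - α₀) / (1 - α₁) := (one_le_div h1α1).2 (by linarith)
    exact (h1.trans h2).trans (le_max_right _ _)
  have hv01 : (1 - α₁) / (1 - α₀) ≤ α₁ / α₀ := by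
    have h1 : (1 - α₁) / (1 - α₀) ≤ 1 := (div_le_one h1α0).2 (by linarith)
    have h2 : (1:ℝ) ≤ α₁ / α₀ := (one_le_div hα0pos).2 hα₁.le
    linarith
  have hR1 : (1:ℝ) ≤ α₁ * (1 - α₀) / (α₀ * (1 - α₁)) :=
    (one_le_div (by positivity)).2 (by nlinarith)
  have hRB : α₁ * (1 - α₀) / (α₀ * (1 - α₁)) * ((1 - α₁) / (((p:ℝ) - m) * p))
      = α₁ / ((m:ℝ) * p) := by
    rw [hα₀, div_mul_div_comm, div_eq_div_iff (by positivity) (by positivity)]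
    field_simp
  have hApos : (0:ℝ) < α₁ / ((m:ℝ) * p) := div_pos hα1pos (by positivity)
  have hBA : (1 - α₁) / (((p:ℝ) - m) * p) ≤ α₁ / ((m:ℝ) * p) := by
    rw [hv0, hv1]
    exact mul_le_mul_of_nonneg_right hv01 (by positivity)
  refine ⟨fun j hj => ⟨hprod j, hprod0 j, hnn j, hsum j⟩, ?_, ?_⟩
  · intro j hj φ
    rw [hM]
    split_ifs with h
    · refine ⟨?_, ?_, ?_⟩
      · left
        rw [hv1, sq]
        field_simp
      · rw [hv1]
        exact mul_le_mul_of_nonneg_right hlow (by positivity)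
      · rw [hv1]
        exact mul_le_mul_of_nonneg_right (le_max_left _ _) (by positivity)
    · refine ⟨?_, ?_, ?_⟩
      · right
        rw [hv0, sq]
        field_simp
        exact Set.mem_singleton _
      · rw [hv0]
        exact mul_le_mul_of_nonneg_right (min_le_right _ _) (by positivity)
      · rw [hv0]
        exact mul_le_mul_of_nonneg_right hhigh (by positivity)
  · intro j j' hj hj' hjj φ
    rw [hM, hM]
    split_ifs with h1 h2 h2
    · exact le_mul_of_one_le_left hApos.le hR1
    · exact hRB.ge
    · exact hBA.trans (le_mul_of_one_le_left hApos.le hR1)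
    · rw [hRB]; exact hBA
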